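/- Let V ∈ ℝ^{(n'+r)×(n'+r)} be symmetric with blocks V_xx ∈ ℝ^{n'×n'}, V_{x x_r} ∈ ℝ^{n'×r}, V_{x_r x_r} ∈ ℝ^{r×r} (and V_{x_r x} = V_{x x_r}ᵀ). Let the state-augmented Jacobians be F̂_x = [[F_x, 0],[0, I_r]] and F̂_u = [F_u; 0], where F_x ∈ ℝ^{n'×n} and F_u ∈ ℝ^{n'×m}, and let Q_uu ∈ ℝ^{m×m} be symmetric invertible. Define Q̂_x̂x̂ = F̂_xᵀ V F̂_x and Q̂_ux̂ = F̂_uᵀ V F̂_x. Then the updated augmented value Hessian V̂ := Q̂_x̂x̂ − Q̂_ux̂ᵀ Q_uu⁻¹ Q̂_ux̂ has blocks: top-left block Q_xx + Q_xu K, top-right block F_xᵀ V_{x x_r} − Kᵀ Q_uu G, and bottom-right block V_{x_r x_r} − Gᵀ Q_uu G, where Q_xx = F_xᵀ V_xx F_x, Q_ux = F_uᵀ V_xx F_x, Q_xu = Q_uxᵀ, K = −Q_uu⁻¹ Q_ux, and G = −Q_uu⁻¹ F_uᵀ V_{x x_r}. -/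

import Mathlib

open Matrix

/-- Blocks of the updated augmented value Hessian
V̂ = Q̂_x̂x̂ − Q̂_ux̂ᵀ Q_uu⁻¹ Q̂_ux̂ in GT-DDP on a residual-augmented system. -/
theorem gtddp_value_hessian_blocks {n npr r m : ℕ}
    (Vxx : Matrix (Fin npr) (Fin npr) ℝ)
    (Vxxr : Matrix (Fin npr) (Fin r) ℝ)
    (Vxrxr : Matrix (Fin r) (Fin r) ℝ)
    (Fx : Matrix (Fin npr) (Fin n) ℝ) (Fu : Matrix (Fin npr) (Fin m) ℝ)
    (Quu : Matrix (Fin m) (Fin m) ℝ)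
    (hVxx : Vxx.IsSymm) (hVxrxr : Vxrxr.IsSymm)
    (hQuu : Quu.IsSymm) (hQuuInv : IsUnit Quu.det) :
    let V : Matrix (Fin npr ⊕ Fin r) (Fin npr ⊕ Fin r) ℝ :=
      fromBlocks Vxx Vxxr Vxxrᵀ Vxrxr
    let Fxhat : Matrix (Fin npr ⊕ Fin r) (Fin n ⊕ Fin r) ℝ :=
      fromBlocks Fx 0 0 1
    let Fuhat : Matrix (Fin npr ⊕ Fin r) (Fin m) ℝ :=
      Matrix.of fun i j => Sum.casesOn i (fun i1 => Fu i1 j) (fun _ => 0)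
    let Qhxx := Fxhatᵀ * V * Fxhat
    let Qhux := Fuhatᵀ * V * Fxhat
    let Vhat := Qhxx - Qhuxᵀ * Quu⁻¹ * Qhux
    let Qxx := Fxᵀ * Vxx * Fx
    let Qux := Fuᵀ * Vxx * Fx
    let Qxu := Quxᵀ
    let K := -(Quu⁻¹ * Qux)
    let G := -(Quu⁻¹ * (Fuᵀ * Vxxr))
    Vhat.toBlocks₁₁ = Qxx + Qxu * K
      ∧ Vhat.toBlocks₁₂ = Fxᵀ * Vxxr - Kᵀ * Quu * G
      ∧ Vhat.toBlocks₂₂ = Vxrxr - Gᵀ * Quu * G := by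
  intro V Fxhat Fuhat Qhxx Qhux Vhat Qxx Qux Qxu K G
  have hFuhat : Fuhat = fromRows Fu 0 := by
    ext (i | i) j <;> rfl
  have hinv : Quu⁻¹ᵀ = Quu⁻¹ := by
    rw [Matrix.transpose_nonsing_inv, hQuu.eq]
  have hone : Quu⁻¹ * Quu = 1 := Matrix.nonsing_inv_mul _ hQuuInv
  -- compute Qhux
  have hQhux : Qhux = fromCols Qux (Fuᵀ * Vxxr) := by
    show Fuhatᵀ * V * Fxhat = _
    rw [hFuhat, transpose_fromRows, transpose_zero]
    show fromCols Fuᵀ 0 * fromBlocks Vxx Vxxr Vxxrᵀ Vxrxr * fromBlocks Fx 0 0 1 = _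
    rw [fromCols_mul_fromBlocks, fromCols_mul_fromBlocks]
    simp [Qux, Matrix.mul_assoc]
  -- compute Qhxx
  have hQhxx : Qhxx = fromBlocks Qxx (Fxᵀ * Vxxr) (Vxxrᵀ * Fx) Vxrxr := by
    show Fxhatᵀ * V * Fxhat = _
    show (fromBlocks Fx 0 0 1)ᵀ * fromBlocks Vxx Vxxr Vxxrᵀ Vxrxr * fromBlocks Fx 0 0 1 = _
    rw [Matrix.fromBlocks_transpose, fromBlocks_multiply, fromBlocks_multiply]
    simp [Qxx, Matrix.mul_assoc]
  have hVhat : Vhat = fromBlocks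
      (Qxx - Quxᵀ * (Quu⁻¹ * Qux))
      (Fxᵀ * Vxxr - Quxᵀ * (Quu⁻¹ * (Fuᵀ * Vxxr)))
      (Vxxrᵀ * Fx - (Fuᵀ * Vxxr)ᵀ * (Quu⁻¹ * Qux))
      (Vxrxr - (Fuᵀ * Vxxr)ᵀ * (Quu⁻¹ * (Fuᵀ * Vxxr))) := by
    show Qhxx - Qhuxᵀ * Quu⁻¹ * Qhux = _
    rw [hQhxx, hQhux, transpose_fromCols, Matrix.mul_assoc,
      mul_fromCols, fromRows_mul_fromCols]
    ext (i | i) (j | j) <;> simp [fromBlocks]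
  have hKQ : Kᵀ * Quu * G = Quxᵀ * (Quu⁻¹ * (Fuᵀ * Vxxr)) := by
    show (-(Quu⁻¹ * Qux))ᵀ * Quu * -(Quu⁻¹ * (Fuᵀ * Vxxr)) = _
    rw [transpose_neg, transpose_mul, hinv, Matrix.neg_mul, Matrix.neg_mul,
      Matrix.mul_neg, neg_neg]
    rw [Matrix.mul_assoc (Quxᵀ * Quu⁻¹) Quu _, ← Matrix.mul_assoc Quu Quu⁻¹ _,
      Matrix.mul_nonsing_inv _ hQuuInv, Matrix.one_mul, Matrix.mul_assoc]
  have hGQ : Gᵀ * Quu * G = (Fuᵀ * Vxxr)ᵀ * (Quu⁻¹ * (Fuᵀ * Vxxr)) := by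
    show (-(Quu⁻¹ * (Fuᵀ * Vxxr)))ᵀ * Quu * -(Quu⁻¹ * (Fuᵀ * Vxxr)) = _
    rw [transpose_neg, transpose_mul, hinv, Matrix.neg_mul, Matrix.neg_mul,
      Matrix.mul_neg, neg_neg]
    rw [Matrix.mul_assoc ((Fuᵀ * Vxxr)ᵀ * Quu⁻¹) Quu _, ← Matrix.mul_assoc Quu Quu⁻¹ _,
      Matrix.mul_nonsing_inv _ hQuuInv, Matrix.one_mul, Matrix.mul_assoc]
  refine ⟨?_, ?_, ?_⟩
  · rw [hVhat, toBlocks_fromBlocks₁₁]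
    show _ = Qxx + Quxᵀ * -(Quu⁻¹ * Qux)
    rw [Matrix.mul_neg, ← sub_eq_add_neg]
  · rw [hVhat, toBlocks_fromBlocks₁₂, hKQ]
  · rw [hVhat, toBlocks_fromBlocks₂₂, hGQ]
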